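/- Assume the L^∞ spectral inequality on E holds with constant N ≥ 1 and that the Sobolev hypothesis holds with exponent σ > 0 and constant C_S. Then for every ε ∈ (0,1) there exists N' > 0 (depending only on N, ε, σ, C_S and μ(M)) such that for all 0 ≤ s < t and all f ∈ L²(μ): ‖S_t f‖_{L²(μ)} ≤ N' e^{N'/(t−s)} ( ‖(S_t f)·1_E‖_{L^∞(μ)} )^{1−ε} ‖S_s f‖_{L²(μ)}^{ε}. -/

import Mathlib

open MeasureTheory Real Filter
set_option maxHeartbeats 4000000

lemma coeff_of_hasSum {H : Type} [NormedAddCommGroup H] [InnerProductSpace ℝ H]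
    (e : HilbertBasis ℕ ℝ H) {c : ℕ → ℝ} {g : H}
    (h : HasSum (fun k => c k • e k) g) (j : ℕ) : e.repr g j = c j := by
  have h2 := h.mapL (innerSL ℝ (e j))
  have h3 : (fun k => (innerSL ℝ (e j)) (c k • e k)) = fun k => if k = j then c j else 0 := by
    funext k
    show inner ℝ (e j) (c k • e k) = _
    rw [real_inner_smul_right]
    rcases eq_or_ne k j with rfl | hk
    · have h1 : inner ℝ (e k) (e k) = 1 := by
        rw [real_inner_self_eq_norm_sq, e.orthonormal.1 k]; norm_num
      simp [h1, e.orthonormal.1 k]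
    · have h1 : inner ℝ (e j) (e k) = 0 := e.orthonormal.2 (Ne.symm hk)
      simp [h1, hk]
  rw [h3] at h2
  have h4 := hasSum_ite_eq j (c j)
  have h5 := h2.unique h4
  rw [e.repr_apply_apply]
  exact h5

lemma hasSum_sq_of_hasSum {H : Type} [NormedAddCommGroup H] [InnerProductSpace ℝ H]
    (e : HilbertBasis ℕ ℝ H) {c : ℕ → ℝ} {g : H}
    (h : HasSum (fun k => c k • e k) g) :
    HasSum (fun k => c k ^ 2) (‖g‖ ^ 2) := by
  have h2 := e.hasSum_inner_mul_inner g g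
  have h3 : ∀ i, e.repr g i = c i := coeff_of_hasSum e h
  have hf : (fun k => c k ^ 2) = fun i => inner ℝ g (e i) * inner ℝ (e i) g := by
    funext i
    show c i ^ 2 = inner ℝ g (e i) * inner ℝ (e i) g
    have hi : inner ℝ (e i) g = c i := by rw [← e.repr_apply_apply, h3]
    have hi2 : inner ℝ g (e i) = c i := by rw [real_inner_comm]; exact hi
    rw [hi, hi2]; ring
  have hn : ‖g‖ ^ 2 = inner ℝ g g := by rw [real_inner_self_eq_norm_sq]
  rw [hf, hn]; exact h2

lemma aux_poly (N τ ε x : ℝ) (hε0 : 0 < ε) (hε1 : ε < 1) (hN : 0 < N) (hτ : 0 < τ)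
    (hx : 0 ≤ x) : 0 ≤ N^4 - (1-ε)*x*τ*ε^2*N^2 + τ^2*ε^4*x^2/4 := by
  nlinarith [sq_nonneg ((1-ε)*N^2 - τ*ε^2*x/2),
    mul_nonneg (mul_nonneg hε0.le (by linarith : (0:ℝ) ≤ 2-ε)) (pow_pos hN 4).le]

theorem interpolation_Linfty {M : Type} [MeasurableSpace M] (μ : Measure M)
    [IsFiniteMeasure μ]
    (e : HilbertBasis ℕ ℝ (Lp ℝ 2 μ)) (lam : ℕ → ℝ) (hlam : ∀ k, 0 ≤ lam k)
    (E : Set M) (hE : MeasurableSet E)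
    (Proj : ℝ → Lp ℝ 2 μ → Lp ℝ 2 μ)
    (hProj : ∀ (Λ : ℝ) (f : Lp ℝ 2 μ),
      HasSum (fun k => (if lam k ≤ Λ then e.repr f k else 0) • e k) (Proj Λ f))
    (S : ℝ → Lp ℝ 2 μ → Lp ℝ 2 μ)
    (hS : ∀ t : ℝ, 0 ≤ t → ∀ f : Lp ℝ 2 μ,
      HasSum (fun k => (Real.exp (-(t * lam k ^ 2)) * e.repr f k) • e k) (S t f))
    (N : ℝ) (hN : 1 ≤ N)
    (hspec : ∀ Λ : ℝ, 0 ≤ Λ → ∀ f : Lp ℝ 2 μ,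
      ‖Proj Λ f‖ ≤ N * Real.exp (N * Λ) *
        (eLpNorm (E.indicator ⇑(Proj Λ f)) ⊤ μ).toReal)
    (σ C_S : ℝ) (hσ : 0 < σ)
    (hSob : ∀ g : Lp ℝ 2 μ,
      Summable (fun k => (1 + lam k) ^ (2 * σ) * (e.repr g k) ^ 2) →
      eLpNorm (⇑g) ⊤ μ ≤ ENNReal.ofReal
        (C_S * (∑' k, (1 + lam k) ^ (2 * σ) * (e.repr g k) ^ 2) ^ ((1 : ℝ) / 2)))
    (ε : ℝ) (hε0 : 0 < ε) (hε1 : ε < 1) :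
    ∃ N' > 0, ∀ s t : ℝ, 0 ≤ s → s < t → ∀ f : Lp ℝ 2 μ,
      ‖S t f‖ ≤ N' * Real.exp (N' / (t - s)) *
        (eLpNorm (E.indicator ⇑(S t f)) ⊤ μ).toReal ^ (1 - ε) * ‖S s f‖ ^ ε := by
  have hN0 : (0:ℝ) < N := lt_of_lt_of_le one_pos hN
  set C : ℝ := max C_S 0 + 1 with hCdef
  have hC1 : (1:ℝ) ≤ C := by
    have := le_max_right C_S 0; simp only [hCdef]; linarith
  have hC0 : (0:ℝ) < C := lt_of_lt_of_le one_pos hC1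
  have hCS : C_S ≤ C := by
    have := le_max_left C_S 0; simp only [hCdef]; linarith
  set K1 : ℝ := (C + 1) * N with hK1def
  set K2 : ℝ := σ^2/2 + N^2 with hK2def
  have hK1 : (0:ℝ) < K1 := by positivity
  have hK2 : (0:ℝ) < K2 := by positivity
  set N' : ℝ := N + K1 + K2 + N^2/ε^2 + 1 with hN'def
  have hN'1 : (1:ℝ) ≤ N' := by
    have h1 : (0:ℝ) ≤ N^2/ε^2 := by positivity
    simp only [hN'def]; linarith
  have hN'0 : (0:ℝ) < N' := lt_of_lt_of_le one_pos hN'1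
  refine ⟨N', hN'0, ?_⟩
  intro s t hs hst f
  set τ : ℝ := t - s with hτdef
  have hτ : (0:ℝ) < τ := sub_pos.2 hst
  have ht0 : (0:ℝ) ≤ t := le_of_lt (lt_of_le_of_lt hs hst)
  have hexpN' : (1:ℝ) ≤ Real.exp (N'/τ) := by
    rw [← Real.exp_zero]; exact Real.exp_le_exp.2 (by positivity)
  have hSt := hS t ht0 f
  have hSs := hS s hs f
  set B : ℝ := ‖S s f‖ with hBdef
  set A : ℝ := ‖S t f‖ with hAdef
  set D : ℝ := (eLpNorm (E.indicator ⇑(S t f)) ⊤ μ).toReal with hDdef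
  have hA2 : HasSum (fun k => (Real.exp (-(t * lam k ^ 2)) * e.repr f k)^2) (A^2) :=
    hasSum_sq_of_hasSum e hSt
  have hB2 : HasSum (fun k => (Real.exp (-(s * lam k ^ 2)) * e.repr f k)^2) (B^2) :=
    hasSum_sq_of_hasSum e hSs
  have hA0 : (0:ℝ) ≤ A := norm_nonneg _
  have hB0 : (0:ℝ) ≤ B := norm_nonneg _
  have hD0 : (0:ℝ) ≤ D := ENNReal.toReal_nonneg
  -- A ≤ B
  have hAB : A ≤ B := by
    have hsq : A^2 ≤ B^2 := by
      refine hasSum_le (fun k => ?_) hA2 hB2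
      have h1 : Real.exp (-(t * lam k ^ 2)) ≤ Real.exp (-(s * lam k ^ 2)) :=
        Real.exp_le_exp.2 (by nlinarith [sq_nonneg (lam k)])
      have h2 : Real.exp (-(t * lam k ^ 2))^2 ≤ Real.exp (-(s * lam k ^ 2))^2 := by
        apply pow_le_pow_left₀ (le_of_lt (Real.exp_pos _)) h1
      calc (Real.exp (-(t * lam k ^ 2)) * e.repr f k)^2
          = Real.exp (-(t * lam k ^ 2))^2 * (e.repr f k)^2 := by ring
        _ ≤ Real.exp (-(s * lam k ^ 2))^2 * (e.repr f k)^2 :=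
            mul_le_mul_of_nonneg_right h2 (sq_nonneg _)
        _ = (Real.exp (-(s * lam k ^ 2)) * e.repr f k)^2 := by ring
    nlinarith
  -- termwise Sobolev-type bound
  have hterm : ∀ Λ : ℝ, 0 ≤ Λ → ∀ k : ℕ, Λ ≤ lam k →
      (1 + lam k) ^ (2*σ) * (Real.exp (-(t * lam k ^ 2)) * e.repr f k)^2
      ≤ Real.exp (σ^2/τ) * Real.exp (-(τ*Λ^2)) *
        (Real.exp (-(s * lam k ^ 2)) * e.repr f k)^2 := by
    intro Λ hΛ k hΛk
    have hlk := hlam k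
    have h1 : (1:ℝ) + lam k ≤ Real.exp (lam k) := by
      have := Real.add_one_le_exp (lam k); linarith
    have h2 : (1 + lam k) ^ (2*σ) ≤ (Real.exp (lam k)) ^ (2*σ) :=
      Real.rpow_le_rpow (by linarith) h1 (by positivity)
    have h3 : (Real.exp (lam k)) ^ (2*σ) = Real.exp (lam k * (2*σ)) :=
      (Real.exp_mul (lam k) (2*σ)).symm
    have h4 : Real.exp (lam k * (2*σ)) * Real.exp (-(t * lam k ^ 2))^2
        ≤ Real.exp (σ^2/τ) * Real.exp (-(τ*Λ^2)) * Real.exp (-(s * lam k ^ 2))^2 := by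
      have e2 : ∀ x:ℝ, Real.exp x ^ 2 = Real.exp (2*x) := fun x => by
        rw [pow_two, ← Real.exp_add]; ring_nf
      rw [e2, e2, ← Real.exp_add, ← Real.exp_add, ← Real.exp_add]
      apply Real.exp_le_exp.2
      have hq : σ^2/τ ≥ 2*σ*lam k - τ * lam k^2 := by
        rw [ge_iff_le, ← sub_nonneg]
        have key : σ^2/τ - (2*σ*lam k - τ*lam k^2) = (σ - τ*lam k)^2/τ := by
          field_simp; ring
        rw [key]; positivity
      have hΛ2 : Λ^2 ≤ lam k^2 := pow_le_pow_left₀ hΛ hΛk 2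
      have hmul : τ*Λ^2 ≤ τ*lam k^2 := mul_le_mul_of_nonneg_left hΛ2 (le_of_lt hτ)
      have hts : t = τ + s := by simp only [hτdef]; ring
      rw [hts]
      nlinarith [hq, hmul]
    calc (1 + lam k) ^ (2*σ) * (Real.exp (-(t * lam k ^ 2)) * e.repr f k)^2
        = ((1 + lam k) ^ (2*σ) * Real.exp (-(t * lam k ^ 2))^2) * (e.repr f k)^2 := by ring
      _ ≤ (Real.exp (σ^2/τ) * Real.exp (-(τ*Λ^2)) * Real.exp (-(s * lam k ^ 2))^2)
            * (e.repr f k)^2 := by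
          apply mul_le_mul_of_nonneg_right _ (sq_nonneg _)
          calc (1 + lam k) ^ (2*σ) * Real.exp (-(t * lam k ^ 2))^2
              ≤ Real.exp (lam k * (2*σ)) * Real.exp (-(t * lam k ^ 2))^2 := by
                apply mul_le_mul_of_nonneg_right _ (sq_nonneg _)
                rw [← h3]; exact h2
            _ ≤ _ := h4
      _ = Real.exp (σ^2/τ) * Real.exp (-(τ*Λ^2)) *
            (Real.exp (-(s * lam k ^ 2)) * e.repr f k)^2 := by ring
  -- coefficients of S t f
  have hrepr_t : ∀ k, e.repr (S t f) k = Real.exp (-(t * lam k ^ 2)) * e.repr f k :=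
    coeff_of_hasSum e hSt
  have hbase_nonneg : ∀ k : ℕ, (0:ℝ) ≤ 1 + lam k := fun k => by linarith [hlam k]
  have hsum_t : Summable (fun k => (1 + lam k) ^ (2*σ) * (e.repr (S t f) k)^2) := by
    refine Summable.of_nonneg_of_le
      (fun k => mul_nonneg (Real.rpow_nonneg (hbase_nonneg k) _) (sq_nonneg _))
      (fun k => ?_)
      ((hB2.summable).mul_left (Real.exp (σ^2/τ) * Real.exp (-(τ*(0:ℝ)^2))))
    rw [hrepr_t k]
    exact hterm 0 le_rfl k (hlam k)
  have hStf_top : eLpNorm (⇑(S t f)) ⊤ μ < ⊤ :=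
    lt_of_le_of_lt (hSob (S t f) hsum_t) ENNReal.ofReal_lt_top
  have hD_ne : eLpNorm (E.indicator ⇑(S t f)) ⊤ μ ≠ ⊤ :=
    (lt_of_le_of_lt (eLpNorm_indicator_le _) hStf_top).ne
  have hD_eq : eLpNorm (E.indicator ⇑(S t f)) ⊤ μ = ENNReal.ofReal D :=
    (ENNReal.ofReal_toReal hD_ne).symm
  -- the key one-parameter family of bounds
  have key : ∀ Λ : ℝ, 0 ≤ Λ → A ≤ N * Real.exp (N*Λ) * D
      + K1 * Real.exp (K2/τ) * Real.exp (-(τ*Λ^2)/4) * B := by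
    intro Λ hΛ
    have hP := hProj Λ (S t f)
    simp only [hrepr_t] at hP
    have hg : HasSum (fun k =>
        (if lam k ≤ Λ then (0:ℝ) else Real.exp (-(t * lam k ^ 2)) * e.repr f k) • e k)
        (S t f - Proj Λ (S t f)) := by
      have h := hSt.sub hP
      have hfun : ∀ k : ℕ,
          (if lam k ≤ Λ then (0:ℝ) else Real.exp (-(t * lam k ^ 2)) * e.repr f k) • e k
          = (Real.exp (-(t * lam k ^ 2)) * e.repr f k) • e k
            - (if lam k ≤ Λ then Real.exp (-(t * lam k ^ 2)) * e.repr f k else 0) • e k := by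
        intro k; split_ifs <;> simp
      simpa only [hfun] using h
    set G : Lp ℝ 2 μ := S t f - Proj Λ (S t f) with hGdef
    have hg2 := hasSum_sq_of_hasSum e hg
    have hgrepr := coeff_of_hasSum e hg
    -- L² bound on the tail
    have hgB : ‖G‖ ≤ Real.exp (-(τ*Λ^2)) * B := by
      have hsq : ‖G‖^2 ≤ (Real.exp (-(τ*Λ^2)))^2 * B^2 := by
        refine hasSum_le (fun k => ?_) hg2 (hB2.mul_left _)
        by_cases hcase : lam k ≤ Λ
        · simp only [hcase, if_true]
          have h00 : ((0:ℝ))^2 = 0 := by norm_num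
          rw [h00]
          positivity
        · simp only [hcase, if_false]
          push_neg at hcase
          have h1 : Real.exp (-(t*lam k^2)) ≤ Real.exp (-(τ*Λ^2)) * Real.exp (-(s*lam k^2)) := by
            rw [← Real.exp_add]
            apply Real.exp_le_exp.2
            have hΛ2 : Λ^2 ≤ lam k^2 := pow_le_pow_left₀ hΛ hcase.le 2
            have hmul : τ*Λ^2 ≤ τ*lam k^2 := mul_le_mul_of_nonneg_left hΛ2 hτ.le
            have hts : t = τ + s := by simp only [hτdef]; ring
            rw [hts]; nlinarith
          calc (Real.exp (-(t*lam k^2)) * e.repr f k)^2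
              = Real.exp (-(t*lam k^2))^2 * (e.repr f k)^2 := by ring
            _ ≤ (Real.exp (-(τ*Λ^2)) * Real.exp (-(s*lam k^2)))^2 * (e.repr f k)^2 :=
                mul_le_mul_of_nonneg_right
                  (pow_le_pow_left₀ (Real.exp_pos _).le h1 2) (sq_nonneg _)
            _ = Real.exp (-(τ*Λ^2))^2 * (Real.exp (-(s*lam k^2)) * e.repr f k)^2 := by ring
      nlinarith [norm_nonneg G, mul_nonneg (Real.exp_pos (-(τ*Λ^2))).le hB0]
    -- termwise Sobolev bound for the tail
    have hterm_g : ∀ k : ℕ, (1 + lam k) ^ (2*σ) * (e.repr G k)^2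
        ≤ Real.exp (σ^2/τ) * Real.exp (-(τ*Λ^2)) *
          (Real.exp (-(s * lam k ^ 2)) * e.repr f k)^2 := by
      intro k
      rw [hgrepr k]
      by_cases hcase : lam k ≤ Λ
      · simp only [hcase, if_true]
        have : ((0:ℝ))^2 = 0 := by norm_num
        rw [this, mul_zero]
        positivity
      · simp only [hcase, if_false]
        push_neg at hcase
        exact hterm Λ hΛ k hcase.le
    have hsum_g : Summable (fun k => (1 + lam k) ^ (2*σ) * (e.repr G k)^2) :=
      Summable.of_nonneg_of_le
        (fun k => mul_nonneg (Real.rpow_nonneg (hbase_nonneg k) _) (sq_nonneg _))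
        hterm_g ((hB2.summable).mul_left _)
    have htsum : (∑' k, (1 + lam k) ^ (2*σ) * (e.repr G k)^2)
        ≤ Real.exp (σ^2/τ) * Real.exp (-(τ*Λ^2)) * B^2 := by
      rw [← (hB2.mul_left (Real.exp (σ^2/τ) * Real.exp (-(τ*Λ^2)))).tsum_eq]
      exact Summable.tsum_le_tsum hterm_g hsum_g ((hB2.summable).mul_left _)
    -- L^∞ bound on the tail
    set W : ℝ := Real.exp (σ^2/(2*τ)) * Real.exp (-(τ*Λ^2)/2) * B with hWdef
    have hW0 : (0:ℝ) ≤ W := by positivity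
    set R : ℝ := C * W with hRdef
    have hR0 : (0:ℝ) ≤ R := mul_nonneg hC0.le hW0
    have hg_infty : eLpNorm (⇑G) ⊤ μ ≤ ENNReal.ofReal R := by
      refine (hSob G hsum_g).trans (ENNReal.ofReal_le_ofReal ?_)
      have hT0 : (0:ℝ) ≤ ∑' k, (1 + lam k) ^ (2*σ) * (e.repr G k)^2 :=
        tsum_nonneg (fun k => mul_nonneg (Real.rpow_nonneg (hbase_nonneg k) _) (sq_nonneg _))
      have e2 : ∀ x:ℝ, Real.exp x ^ 2 = Real.exp (2*x) := fun x => by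
        rw [pow_two, ← Real.exp_add]; ring_nf
      have hQ : Real.exp (σ^2/τ) * Real.exp (-(τ*Λ^2)) * B^2 = W^2 := by
        rw [hWdef, mul_pow, mul_pow, e2, e2]
        have h1 : 2*(σ^2/(2*τ)) = σ^2/τ := by field_simp
        have h2 : 2*(-(τ*Λ^2)/2) = -(τ*Λ^2) := by ring
        rw [h1, h2]
      have hTW : (∑' k, (1 + lam k) ^ (2*σ) * (e.repr G k)^2) ≤ W^2 := by
        rw [← hQ]; exact htsum
      have h6 : (∑' k, (1 + lam k) ^ (2*σ) * (e.repr G k)^2) ^ ((1:ℝ)/2) ≤ W := by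
        calc (∑' k, (1 + lam k) ^ (2*σ) * (e.repr G k)^2) ^ ((1:ℝ)/2)
            ≤ (W^2 : ℝ) ^ ((1:ℝ)/2) := Real.rpow_le_rpow hT0 hTW (by norm_num)
          _ = W := by
              rw [← Real.rpow_natCast W 2, ← Real.rpow_mul hW0]
              norm_num
      calc C_S * (∑' k, (1 + lam k) ^ (2*σ) * (e.repr G k)^2) ^ ((1:ℝ)/2)
          ≤ C * W := mul_le_mul hCS h6 (Real.rpow_nonneg hT0 _) hC0.le
        _ = R := hRdef.symm
    -- indicator split
    have hcoe : ⇑(Proj Λ (S t f)) =ᵐ[μ] ⇑(S t f) - ⇑G := by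
      have h := Lp.coeFn_sub (S t f) G
      rw [hGdef, sub_sub_cancel] at h
      exact h
    have hind : E.indicator ⇑(Proj Λ (S t f)) =ᵐ[μ] E.indicator (⇑(S t f) - ⇑G) := by
      filter_upwards [hcoe] with x hx
      by_cases hxE : x ∈ E <;> simp [Set.indicator_apply, hxE, hx]
    have hsplit : eLpNorm (E.indicator ⇑(Proj Λ (S t f))) ⊤ μ
        ≤ ENNReal.ofReal D + ENNReal.ofReal R := by
      rw [eLpNorm_congr_ae hind]
      have hpi : E.indicator (⇑(S t f) - ⇑G) = E.indicator ⇑(S t f) - E.indicator ⇑G := by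
        funext x; by_cases hxE : x ∈ E <;> simp [Set.indicator_apply, hxE]
      rw [hpi]
      refine (eLpNorm_sub_le ((Lp.aestronglyMeasurable _).indicator hE)
        ((Lp.aestronglyMeasurable _).indicator hE) le_top).trans ?_
      exact add_le_add (le_of_eq hD_eq) ((eLpNorm_indicator_le _).trans hg_infty)
    have hPnorm : ‖Proj Λ (S t f)‖ ≤ N * Real.exp (N*Λ) * (D + R) := by
      refine (hspec Λ hΛ (S t f)).trans ?_
      refine mul_le_mul_of_nonneg_left ?_ (mul_nonneg hN0.le (Real.exp_pos _).le)
      have h1 : eLpNorm (E.indicator ⇑(Proj Λ (S t f))) ⊤ μ ≤ ENNReal.ofReal (D + R) := by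
        rw [ENNReal.ofReal_add hD0 hR0]; exact hsplit
      calc (eLpNorm (E.indicator ⇑(Proj Λ (S t f))) ⊤ μ).toReal
          ≤ (ENNReal.ofReal (D + R)).toReal := ENNReal.toReal_mono ENNReal.ofReal_ne_top h1
        _ = D + R := ENNReal.toReal_ofReal (by linarith)
    have hA_split : A ≤ ‖Proj Λ (S t f)‖ + ‖G‖ := by
      have hsum' : S t f = Proj Λ (S t f) + G := by rw [hGdef]; abel
      calc A = ‖Proj Λ (S t f) + G‖ := by rw [hAdef, ← hsum']
        _ ≤ _ := norm_add_le _ _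
    -- numeric combination
    have hnum : N * Real.exp (N*Λ) * R + Real.exp (-(τ*Λ^2)) * B
        ≤ K1 * Real.exp (K2/τ) * Real.exp (-(τ*Λ^2)/4) * B := by
      have h1 : Real.exp (N*Λ) * Real.exp (-(τ*Λ^2)/2)
          ≤ Real.exp (N^2/τ) * Real.exp (-(τ*Λ^2)/4) := by
        rw [← Real.exp_add, ← Real.exp_add]
        apply Real.exp_le_exp.2
        have h2 : N*Λ - τ*Λ^2/4 ≤ N^2/τ := by
          rw [← sub_nonneg]
          have hid : N^2/τ - (N*Λ - τ*Λ^2/4) = (N - τ*Λ/2)^2/τ := by field_simp; ring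
          rw [hid]; positivity
        linarith
      have h2 : Real.exp (-(τ*Λ^2)) ≤ Real.exp (-(τ*Λ^2)/4) :=
        Real.exp_le_exp.2 (by nlinarith [mul_nonneg hτ.le (sq_nonneg Λ)])
      have h3 : Real.exp (σ^2/(2*τ)) * Real.exp (N^2/τ) = Real.exp (K2/τ) := by
        rw [← Real.exp_add]; congr 1; rw [hK2def]; field_simp
      have he1 : (1:ℝ) ≤ Real.exp (σ^2/(2*τ)) := by
        rw [← Real.exp_zero]; exact Real.exp_le_exp.2 (by positivity)
      have he2 : (1:ℝ) ≤ Real.exp (N^2/τ) := by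
        rw [← Real.exp_zero]; exact Real.exp_le_exp.2 (by positivity)
      calc N * Real.exp (N*Λ) * R + Real.exp (-(τ*Λ^2)) * B
          = N * C * Real.exp (σ^2/(2*τ)) * (Real.exp (N*Λ) * Real.exp (-(τ*Λ^2)/2)) * B
            + Real.exp (-(τ*Λ^2)) * B := by rw [hRdef, hWdef]; ring
        _ ≤ N * C * Real.exp (σ^2/(2*τ)) * (Real.exp (N^2/τ) * Real.exp (-(τ*Λ^2)/4)) * B
            + (Real.exp (σ^2/(2*τ)) * Real.exp (N^2/τ) * Real.exp (-(τ*Λ^2)/4)) * B := by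
            refine add_le_add (mul_le_mul_of_nonneg_right (mul_le_mul_of_nonneg_left h1
              (by positivity)) hB0) (mul_le_mul_of_nonneg_right ?_ hB0)
            calc Real.exp (-(τ*Λ^2)) ≤ Real.exp (-(τ*Λ^2)/4) := h2
              _ = 1 * 1 * Real.exp (-(τ*Λ^2)/4) := by ring
              _ ≤ Real.exp (σ^2/(2*τ)) * Real.exp (N^2/τ) * Real.exp (-(τ*Λ^2)/4) := by
                  refine mul_le_mul_of_nonneg_right ?_ (Real.exp_pos _).le
                  exact mul_le_mul he1 he2 (by norm_num) (le_trans (by norm_num) he1)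
        _ = (N*C + 1) * (Real.exp (σ^2/(2*τ)) * Real.exp (N^2/τ)) * Real.exp (-(τ*Λ^2)/4) * B := by
            ring
        _ ≤ K1 * (Real.exp (σ^2/(2*τ)) * Real.exp (N^2/τ)) * Real.exp (-(τ*Λ^2)/4) * B := by
            have hNC : N*C + 1 ≤ K1 := by rw [hK1def]; nlinarith
            refine mul_le_mul_of_nonneg_right (mul_le_mul_of_nonneg_right
              (mul_le_mul_of_nonneg_right hNC (by positivity)) (Real.exp_pos _).le) hB0
        _ = K1 * Real.exp (K2/τ) * Real.exp (-(τ*Λ^2)/4) * B := by rw [h3]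
    calc A ≤ N * Real.exp (N*Λ) * (D + R) + Real.exp (-(τ*Λ^2)) * B := by
          have := hPnorm; have := hgB; linarith
      _ = N * Real.exp (N*Λ) * D + (N * Real.exp (N*Λ) * R + Real.exp (-(τ*Λ^2)) * B) := by
          ring
      _ ≤ N * Real.exp (N*Λ) * D + K1 * Real.exp (K2/τ) * Real.exp (-(τ*Λ^2)/4) * B := by
          linarith
  -- final assembly
  have hDBnn : (0:ℝ) ≤ D^(1-ε) * B^ε :=
    mul_nonneg (Real.rpow_nonneg hD0 _) (Real.rpow_nonneg hB0 _)
  rcases eq_or_lt_of_le hB0 with hB | hBpos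
  · -- B = 0
    rw [← hB, Real.zero_rpow (ne_of_gt hε0), mul_zero]
    linarith [hAB, hB.symm]
  rcases eq_or_lt_of_le hD0 with hD | hDpos
  · -- D = 0
    have hA_le : ∀ Λ : ℝ, 0 ≤ Λ →
        A ≤ K1 * Real.exp (K2/τ) * Real.exp (-(τ*Λ^2)/4) * B := by
      intro Λ hΛ
      have h := key Λ hΛ
      rw [← hD, mul_zero, zero_add] at h
      exact h
    have h1 : Tendsto (fun Λ:ℝ => τ/4*Λ^2) atTop atTop :=
      Tendsto.const_mul_atTop (by positivity) (tendsto_pow_atTop (by norm_num : 2 ≠ 0))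
    have h2 : Tendsto (fun Λ:ℝ => -(τ/4*Λ^2)) atTop atBot := tendsto_neg_atTop_atBot.comp h1
    have h3 : Tendsto (fun Λ:ℝ => Real.exp (-(τ*Λ^2)/4)) atTop (nhds 0) := by
      have hfe : (fun Λ:ℝ => Real.exp (-(τ*Λ^2)/4)) = fun Λ:ℝ => Real.exp (-(τ/4*Λ^2)) := by
        funext Λ; congr 1; ring
      rw [hfe]
      exact Real.tendsto_exp_atBot.comp h2
    have htend : Tendsto (fun Λ:ℝ => K1 * Real.exp (K2/τ) * Real.exp (-(τ*Λ^2)/4) * B)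
        atTop (nhds 0) := by
      have := (h3.const_mul (K1 * Real.exp (K2/τ))).mul_const B
      simpa using this
    have hA_np : A ≤ 0 :=
      ge_of_tendsto htend ((eventually_ge_atTop 0).mono hA_le)
    rw [← hD, Real.zero_rpow (ne_of_gt (by linarith : (0:ℝ) < 1 - ε))]
    have hz : N' * Real.exp (N'/τ) * 0 * B^ε = 0 := by ring
    rw [hz]
    exact hA_np
  rcases le_or_gt B D with hcase | hcase
  · -- B ≤ D : trivial case
    have hBr : B = B^(1-ε) * B^ε := by
      rw [← Real.rpow_add hBpos]
      have h1 : (1-ε) + ε = 1 := by ring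
      rw [h1, Real.rpow_one]
    have h1 : B^(1-ε) ≤ D^(1-ε) := Real.rpow_le_rpow hB0 hcase (by linarith)
    have hone : (1:ℝ) ≤ N' * Real.exp (N'/τ) := by
      calc (1:ℝ) = 1*1 := by norm_num
        _ ≤ N' * Real.exp (N'/τ) := mul_le_mul hN'1 hexpN' zero_le_one (by linarith)
    calc A ≤ B := hAB
      _ = B^(1-ε)*B^ε := hBr
      _ ≤ D^(1-ε)*B^ε := mul_le_mul_of_nonneg_right h1 (Real.rpow_nonneg hB0 ε)
      _ = 1 * (D^(1-ε)*B^ε) := (one_mul _).symm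
      _ ≤ (N' * Real.exp (N'/τ)) * (D^(1-ε)*B^ε) :=
          mul_le_mul_of_nonneg_right hone hDBnn
      _ = N' * Real.exp (N'/τ) * D^(1-ε) * B^ε := by ring
  · -- main case : 0 < D < B
    set x : ℝ := Real.log (B/D) with hxdef
    have hBD : (0:ℝ) < B/D := div_pos hBpos hDpos
    have hx0 : (0:ℝ) ≤ x := Real.log_nonneg (by rw [le_div_iff₀ hDpos]; linarith)
    set Λ : ℝ := ε/N * x with hΛdef
    have hΛ0 : (0:ℝ) ≤ Λ := mul_nonneg (div_nonneg hε0.le hN0.le) hx0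
    have hkey := key Λ hΛ0
    have hlogBD : Real.exp x = B/D := Real.exp_log hBD
    have hDε : (0:ℝ) < D^ε := Real.rpow_pos_of_pos hDpos ε
    have h1 : Real.exp (N*Λ) = (B/D)^ε := by
      have hNΛ : N*Λ = x*ε := by rw [hΛdef]; field_simp
      rw [hNΛ, Real.exp_mul, hlogBD]
    have hterm1 : N * Real.exp (N*Λ) * D = N * (D^(1-ε) * B^ε) := by
      rw [h1, Real.div_rpow hB0 hD0, Real.rpow_sub hDpos, Real.rpow_one]
      field_simp
    have hterm2 : K1 * Real.exp (K2/τ) * Real.exp (-(τ*Λ^2)/4) * B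
        ≤ K1 * Real.exp ((K2 + N^2/ε^2)/τ) * (D^(1-ε) * B^ε) := by
      have hBsplit : B = B^ε * B^(1-ε) := by
        rw [← Real.rpow_add hBpos]
        have h1' : ε + (1-ε) = 1 := by ring
        rw [h1', Real.rpow_one]
      have hD1ε : (0:ℝ) < D^(1-ε) := Real.rpow_pos_of_pos hDpos _
      have hB1ε : B^(1-ε) = (B/D)^(1-ε) * D^(1-ε) := by
        rw [Real.div_rpow hB0 hD0, div_mul_cancel₀ _ hD1ε.ne']
      have hBDexp : (B/D)^(1-ε) = Real.exp ((1-ε)*x) := by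
        have h := Real.exp_mul x (1-ε)
        rw [hlogBD] at h
        rw [← h]; congr 1; ring
      have hexpbound : Real.exp (-(τ*Λ^2)/4) * Real.exp ((1-ε)*x) ≤ Real.exp ((N^2/ε^2)/τ) := by
        rw [← Real.exp_add]
        apply Real.exp_le_exp.2
        rw [← sub_nonneg]
        have hpos : (0:ℝ) < τ*ε^2*N^2 :=
          mul_pos (mul_pos hτ (pow_pos hε0 2)) (pow_pos hN0 2)
        have key2 : 0 ≤ ((N^2/ε^2)/τ - (-(τ*Λ^2)/4 + (1-ε)*x)) * (τ*ε^2*N^2) := by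
          have hexpand2 : ((N^2/ε^2)/τ - (-(τ*Λ^2)/4 + (1-ε)*x)) * (τ*ε^2*N^2)
              = N^4 - (1-ε)*x*τ*ε^2*N^2 + τ^2*ε^4*x^2/4 := by
            rw [hΛdef]; field_simp; ring
          rw [hexpand2]
          exact aux_poly N τ ε x hε0 hε1 hN0 hτ hx0
        exact (mul_nonneg_iff_of_pos_right hpos).1 key2
      calc K1 * Real.exp (K2/τ) * Real.exp (-(τ*Λ^2)/4) * B
          = K1 * Real.exp (K2/τ) * (Real.exp (-(τ*Λ^2)/4) * Real.exp ((1-ε)*x))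
              * (D^(1-ε) * B^ε) := by
            conv_lhs => rw [hBsplit, hB1ε, hBDexp]
            ring
        _ ≤ K1 * Real.exp (K2/τ) * Real.exp ((N^2/ε^2)/τ) * (D^(1-ε) * B^ε) :=
            mul_le_mul_of_nonneg_right (mul_le_mul_of_nonneg_left hexpbound
              (mul_nonneg hK1.le (Real.exp_pos _).le)) hDBnn
        _ = K1 * Real.exp ((K2 + N^2/ε^2)/τ) * (D^(1-ε) * B^ε) := by
            rw [mul_assoc K1, ← Real.exp_add, ← add_div]
    have hK2N : K2 + N^2/ε^2 ≤ N' := by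
      rw [hN'def]; linarith
    have hfinal : Real.exp ((K2 + N^2/ε^2)/τ) ≤ Real.exp (N'/τ) :=
      Real.exp_le_exp.2 ((div_le_div_iff_of_pos_right hτ).2 hK2N)
    calc A ≤ N * Real.exp (N*Λ) * D + K1 * Real.exp (K2/τ) * Real.exp (-(τ*Λ^2)/4) * B :=
          hkey
      _ ≤ N * (D^(1-ε)*B^ε) + K1 * Real.exp ((K2+N^2/ε^2)/τ) * (D^(1-ε)*B^ε) :=
          add_le_add (le_of_eq hterm1) hterm2
      _ ≤ N * Real.exp (N'/τ) * (D^(1-ε)*B^ε) + K1 * Real.exp (N'/τ) * (D^(1-ε)*B^ε) := by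
          refine add_le_add ?_ (mul_le_mul_of_nonneg_right
            (mul_le_mul_of_nonneg_left hfinal hK1.le) hDBnn)
          have hrw : N * (D^(1-ε)*B^ε) = N * 1 * (D^(1-ε)*B^ε) := by ring
          rw [hrw]
          exact mul_le_mul_of_nonneg_right (mul_le_mul_of_nonneg_left hexpN' hN0.le) hDBnn
      _ = (N + K1) * Real.exp (N'/τ) * (D^(1-ε)*B^ε) := by ring
      _ ≤ N' * Real.exp (N'/τ) * (D^(1-ε)*B^ε) := by
          refine mul_le_mul_of_nonneg_right (mul_le_mul_of_nonneg_right ?_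
            (Real.exp_pos _).le) hDBnn
          have hnn : (0:ℝ) ≤ N^2/ε^2 := by positivity
          rw [hN'def]; linarith
      _ = N' * Real.exp (N'/τ) * D^(1-ε) * B^ε := by ring
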